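/- Let ω = e^{2πi/3}. The polynomial map φ_R: ℂ³ → ℂ³ defined by φ_R(X,Y,Z) = (XYZ, X³+Y³+Z³, (X³+ωY³+ω²Z³)(X³+ω²Y³+ωZ³)) is surjective. -/

import Mathlib

noncomputable section
open Complex

/-- ω = e^{2πi/3}, a primitive cube root of unity. -/
def ω : ℂ := Complex.exp (2 * Real.pi * Complex.I / 3)

/-- The polynomial map φ_R : ℂ³ → ℂ³,
(X,Y,Z) ↦ (XYZ, X³+Y³+Z³, (X³+ωY³+ω²Z³)(X³+ω²Y³+ωZ³)). -/
def φR : ℂ × ℂ × ℂ → ℂ × ℂ × ℂ := fun v =>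
  (v.1 * v.2.1 * v.2.2,
   v.1 ^ 3 + v.2.1 ^ 3 + v.2.2 ^ 3,
   (v.1 ^ 3 + ω * v.2.1 ^ 3 + ω ^ 2 * v.2.2 ^ 3) *
     (v.1 ^ 3 + ω ^ 2 * v.2.1 ^ 3 + ω * v.2.2 ^ 3))

lemma ω_prim : IsPrimitiveRoot ω 3 := by
  have h := Complex.isPrimitiveRoot_exp 3 (by norm_num)
  simpa [ω] using h

lemma ω_cube : ω ^ 3 = 1 := ω_prim.pow_eq_one

lemma ω_sum : ω ^ 2 + ω + 1 = 0 := by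
  have h1 : ω ≠ 1 := ω_prim.ne_one (by norm_num)
  have h2 : (ω - 1) * (ω ^ 2 + ω + 1) = 0 := by
    linear_combination ω_cube
  rcases mul_eq_zero.mp h2 with h | h
  · exact absurd (sub_eq_zero.mp h) h1
  · exact h

lemma key_prod (U V W : ℂ) :
    (U + ω * V + ω ^ 2 * W) * (U + ω ^ 2 * V + ω * W)
      = (U + V + W) ^ 2 - 3 * (U * V + U * W + V * W) := by
  linear_combination (V ^ 2 + W ^ 2 + ω * V * W) * ω_cube
    + (U * V + U * W + V * W) * ω_sum

/-- φ_R is surjective. -/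
theorem φR_surjective : Function.Surjective φR := by
  rintro ⟨a, b, c⟩
  -- find u with u³ - b u² + ((b²-c)/3) u - a³ = 0
  obtain ⟨u, hu⟩ : ∃ u : ℂ, u ^ 3 - b * u ^ 2 + (b ^ 2 - c) / 3 * u - a ^ 3 = 0 := by
    obtain ⟨u, hu⟩ := Complex.exists_root
      (f := Polynomial.X ^ 3 - Polynomial.C b * Polynomial.X ^ 2
        + Polynomial.C ((b ^ 2 - c) / 3) * Polynomial.X - Polynomial.C (a ^ 3))
      (by
        have hdeg : (Polynomial.X ^ 3 - Polynomial.C b * Polynomial.X ^ 2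
            + Polynomial.C ((b ^ 2 - c) / 3) * Polynomial.X
            - Polynomial.C (a ^ 3)).degree = 3 := by compute_degree!
        rw [hdeg]; norm_num)
    exact ⟨u, by simpa [Polynomial.IsRoot] using hu⟩
  obtain ⟨d, hd⟩ : ∃ d : ℂ, d ^ 2
      = (b - u) ^ 2 - 4 * ((b ^ 2 - c) / 3 - u * (b - u)) :=
    IsAlgClosed.exists_pow_nat_eq _ (n := 2) (by norm_num)
  set v : ℂ := ((b - u) + d) / 2 with hv
  set w : ℂ := ((b - u) - d) / 2 with hw
  obtain ⟨x, hx⟩ : ∃ x : ℂ, x ^ 3 = u := IsAlgClosed.exists_pow_nat_eq _ (n := 3) (by norm_num)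
  obtain ⟨y, hy⟩ : ∃ y : ℂ, y ^ 3 = v := IsAlgClosed.exists_pow_nat_eq _ (n := 3) (by norm_num)
  obtain ⟨z, hz⟩ : ∃ z : ℂ, z ^ 3 = w := IsAlgClosed.exists_pow_nat_eq _ (n := 3) (by norm_num)
  have huvw : u * v * w = a ^ 3 := by
    rw [hv, hw]; linear_combination hu - u / 4 * hd
  have hcube : (x * y * z) ^ 3 = a ^ 3 := by
    rw [mul_pow, mul_pow, hx, hy, hz, huvw]
  have hiff : x * y * z = 0 ↔ a = 0 := by
    rw [← pow_eq_zero_iff (n := 3) (by norm_num : (3:ℕ) ≠ 0) (M₀ := ℂ) (a := x * y * z),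
      hcube, pow_eq_zero_iff (by norm_num : (3:ℕ) ≠ 0)]
  set ζ : ℂ := if a = 0 then 1 else a / (x * y * z) with hζ
  have hζ3 : ζ ^ 3 = 1 := by
    rw [hζ]
    split_ifs with h
    · norm_num
    · have hxyz : x * y * z ≠ 0 := fun h0 => h (hiff.mp h0)
      rw [div_pow, hcube]
      exact div_self (fun h0 => h ((pow_eq_zero_iff (by norm_num : (3:ℕ) ≠ 0)).mp h0))
  have hfirst : ζ * x * y * z = a := by
    rw [hζ]
    split_ifs with h
    · rw [h]
      simpa using hiff.mpr h
    · have hxyz : x * y * z ≠ 0 := fun h0 => h (hiff.mp h0)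
      rw [mul_assoc, mul_assoc, ← mul_assoc x, div_mul_cancel₀ a hxyz]
  refine ⟨(ζ * x, y, z), ?_⟩
  have h2 : (ζ * x) ^ 3 = u := by rw [mul_pow, hζ3, one_mul, hx]
  show (ζ * x * y * z, (ζ * x) ^ 3 + y ^ 3 + z ^ 3,
    ((ζ * x) ^ 3 + ω * y ^ 3 + ω ^ 2 * z ^ 3) *
      ((ζ * x) ^ 3 + ω ^ 2 * y ^ 3 + ω * z ^ 3)) = (a, b, c)
  rw [h2, hy, hz, hfirst]
  refine Prod.ext rfl (Prod.ext ?_ ?_)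
  · show u + v + w = b
    rw [hv, hw]; ring
  · show (u + ω * v + ω ^ 2 * w) * (u + ω ^ 2 * v + ω * w) = c
    rw [key_prod, hv, hw]
    linear_combination (3 / 4 : ℂ) * hd
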